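/- Let α ∈ (0,1) be irrational and R the rotation of ℝ² through 2πα. Then the sequence of measures ω_N = (1/N) Σ_{n=1}^N δ_{Rⁿℤ²} converges in the vague topology to ω = Σ_{r ∈ D} η(r) μ_r, where D is the set of radii of non-empty shells of ℤ², η(r) is the number of points of ℤ² of norm r, and μ_r is the uniform probability measure on the circle of radius r (with μ_0 = δ_0). -/

import Mathlib

open MeasureTheory Real Filter
open scoped ENNReal

/-- The uniform probability measure on the circle of radius `r` about the origin
of the plane (identified with `ℂ`); for `r = 0` this is the Dirac measure at `0`. -/
noncomputable def circleUniform (r : ℝ) : Measure ℂ :=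
  Measure.map (fun θ : ℝ => (r : ℂ) * Complex.exp (θ * Complex.I))
    ((ENNReal.ofReal (2 * π))⁻¹ • volume.restrict (Set.Ioc (0 : ℝ) (2 * π)))

/-- The Dirac comb of the rotated square lattice `u·ℤ²` (for `|u| = 1`). -/
noncomputable def rotLatticeComb (u : ℂ) : Measure ℂ :=
  Measure.sum fun p : ℤ × ℤ => Measure.dirac (u * ((p.1 : ℂ) + (p.2 : ℂ) * Complex.I))

/-- The set of radii of non-empty shells of `ℤ²`. -/
def shellRadii : Set ℝ := {r : ℝ | 0 ≤ r ∧ ∃ m n : ℤ, r ^ 2 = (m : ℝ) ^ 2 + (n : ℝ) ^ 2}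

/-- The shelling number of `ℤ²`: the number of lattice points at distance `r`
from the origin. -/
noncomputable def shellCount (r : ℝ) : ℕ :=
  Set.ncard {p : ℤ × ℤ | ‖(p.1 : ℂ) + (p.2 : ℂ) * Complex.I‖ = r}

instance fact2pi : Fact (0 < 2 * π) := ⟨Real.two_pi_pos⟩

/-- The lattice embedding `ℤ² → ℂ`. -/
noncomputable def latC (p : ℤ × ℤ) : ℂ := (p.1 : ℂ) + (p.2 : ℂ) * Complex.I

lemma contMap (r : ℝ) : Continuous fun θ : ℝ => (r : ℂ) * Complex.exp (θ * Complex.I) := by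
  continuity

lemma integral_circleUniform (r : ℝ) (f : ℂ → ℝ) (hf : Continuous f) :
    ∫ z, f z ∂circleUniform r
      = (2 * π)⁻¹ * ∫ θ in Set.Ioc (0 : ℝ) (2 * π), f ((r : ℂ) * Complex.exp (θ * Complex.I)) := by
  rw [circleUniform, integral_map (contMap r).aemeasurable hf.aestronglyMeasurable,
    integral_smul_measure, ENNReal.toReal_inv, ENNReal.toReal_ofReal Real.two_pi_pos.le,
    smul_eq_mul]

lemma circleUniform_univ (r : ℝ) : circleUniform r Set.univ = 1 := by
  rw [circleUniform, Measure.map_apply_of_aemeasurable (contMap r).aemeasurable MeasurableSet.univ,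
    Set.preimage_univ, Measure.smul_apply, Measure.restrict_apply MeasurableSet.univ,
    Set.univ_inter, Real.volume_Ioc, smul_eq_mul, sub_zero, ENNReal.inv_mul_cancel]
  · exact (ENNReal.ofReal_pos.mpr Real.two_pi_pos).ne'
  · exact ENNReal.ofReal_ne_top

lemma sq_abs_latC (p : ℤ × ℤ) :
    ‖latC p‖ ^ 2 = ((p.1 : ℝ)) ^ 2 + ((p.2 : ℝ)) ^ 2 := by
  rw [Complex.sq_norm, Complex.normSq_apply]
  simp [latC]
  ring

lemma finite_ball' (B : ℝ) : Set.Finite {q : ℤ × ℤ | ((q.1 : ℝ)) ^ 2 + ((q.2 : ℝ)) ^ 2 ≤ B} := by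
  set K : ℤ := ⌈Real.sqrt B⌉ with hK
  apply Set.Finite.subset (Set.finite_Icc (-K, -K) (K, K))
  rintro ⟨m, n⟩ hq
  simp only [Set.mem_setOf_eq] at hq
  have h1 : |(m : ℝ)| ≤ Real.sqrt B := Real.abs_le_sqrt (by nlinarith [sq_nonneg ((n : ℝ))])
  have h2 : |(n : ℝ)| ≤ Real.sqrt B := Real.abs_le_sqrt (by nlinarith [sq_nonneg ((m : ℝ))])
  have hs : Real.sqrt B ≤ (K : ℝ) := Int.le_ceil _
  rw [abs_le] at h1 h2
  have a1 : (m : ℝ) ≤ (K : ℝ) := h1.2.trans hs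
  have a2 : ((-K : ℤ) : ℝ) ≤ (m : ℝ) := by push_cast; linarith
  have a3 : (n : ℝ) ≤ (K : ℝ) := h2.2.trans hs
  have a4 : ((-K : ℤ) : ℝ) ≤ (n : ℝ) := by push_cast; linarith
  simp only [Set.mem_Icc, Prod.mk_le_mk]
  exact ⟨⟨by exact_mod_cast a2, by exact_mod_cast a4⟩,
    by exact_mod_cast a1, by exact_mod_cast a3⟩

lemma finite_ball (M : ℝ) : Set.Finite {p : ℤ × ℤ | ‖latC p‖ ≤ M} := by
  apply (finite_ball' (M ^ 2)).subset
  intro p hp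
  simp only [Set.mem_setOf_eq] at hp ⊢
  rw [← sq_abs_latC]
  exact pow_le_pow_left₀ (norm_nonneg _) hp 2

lemma finite_radii (M : ℝ) : Set.Finite {r : ℝ | r ∈ shellRadii ∧ r ≤ M} := by
  apply ((finite_ball' (M ^ 2)).image fun q : ℤ × ℤ => Real.sqrt ((q.1 : ℝ) ^ 2 + (q.2 : ℝ) ^ 2)).subset
  rintro r ⟨⟨hr0, m, n, hmn⟩, hrM⟩
  refine ⟨(m, n), ?_, ?_⟩
  · simp only [Set.mem_setOf_eq]
    rw [← hmn]
    exact pow_le_pow_left₀ hr0 hrM 2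
  · simp only
    rw [← hmn, Real.sqrt_sq hr0]

lemma integral_rotLatticeComb (v : ℂ) (f : ℂ → ℝ) (hf : Continuous f) (S : Finset (ℤ × ℤ))
    (hS : ∀ p : ℤ × ℤ, p ∉ S → f (v * latC p) = 0) :
    Integrable f (rotLatticeComb v) ∧
      ∫ z, f z ∂rotLatticeComb v = ∑ p ∈ S, f (v * latC p) := by
  classical
  have hmeas : Measurable fun z : ℂ => ‖f z‖ₑ := hf.measurable.enorm
  have hint : Integrable f (rotLatticeComb v) := by
    refine ⟨hf.aestronglyMeasurable, ?_⟩
    rw [hasFiniteIntegral_def, rotLatticeComb, lintegral_sum_measure]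
    simp_rw [lintegral_dirac' _ hmeas]
    have hz : ∀ p ∉ S, ‖f (v * ((p.1 : ℂ) + (p.2 : ℂ) * Complex.I))‖ₑ = 0 := by
      intro p hp
      rw [show v * ((p.1 : ℂ) + (p.2 : ℂ) * Complex.I) = v * latC p from rfl, hS p hp]
      simp
    rw [tsum_eq_sum hz]
    exact ENNReal.sum_lt_top.mpr fun p _ => enorm_lt_top
  refine ⟨hint, ?_⟩
  rw [rotLatticeComb] at hint ⊢
  rw [integral_sum_measure hint]
  simp_rw [integral_dirac]
  exact tsum_eq_sum fun p hp => hS p hp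

lemma toCircle_nsmul {T : ℝ} (n : ℕ) (x : AddCircle T) :
    AddCircle.toCircle (n • x) = AddCircle.toCircle x ^ n := by
  induction n with
  | zero => simp
  | succ n ih => rw [succ_nsmul, AddCircle.toCircle_add, ih, pow_succ]

lemma fourier_char {T : ℝ} (k : ℤ) (x y : AddCircle T) :
    (fourier k (x + y) : ℂ) = fourier k x * fourier k y := by
  simp only [fourier_apply, smul_add, AddCircle.toCircle_add, Circle.coe_mul]

lemma fourier_shift {T : ℝ} (k : ℤ) (m : ℕ) (x a : AddCircle T) :
    (fourier k (x + m • a) : ℂ) = fourier k x * (fourier k a : ℂ) ^ m := by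
  rw [fourier_char]
  congr 1
  rw [fourier_apply, fourier_apply, smul_comm, toCircle_nsmul]
  norm_cast

lemma abs_fourier' {T : ℝ} (k : ℤ) (x : AddCircle T) : ‖(fourier k x : ℂ)‖ = 1 := by
  rw [fourier_apply]; exact Circle.norm_coe _

lemma weyl (a : ℝ) (ha : ∀ k : ℤ, k ≠ 0 → (fourier k ((a : ℝ) : AddCircle (2 * π)) : ℂ) ≠ 1)
    (x₀ : AddCircle (2 * π)) (g : C(AddCircle (2 * π), ℂ)) :
    Tendsto (fun N : ℕ => (N : ℂ)⁻¹ * ∑ n ∈ Finset.range N,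
        g (x₀ + (n + 1) • ((a : ℝ) : AddCircle (2 * π))))
      atTop (nhds ((2 * π : ℂ)⁻¹ * ∫ x, g x)) := by
  set A : AddCircle (2 * π) := ((a : ℝ) : AddCircle (2 * π)) with hA
  set S : ℕ → C(AddCircle (2 * π), ℂ) → ℂ :=
    fun N h => (N : ℂ)⁻¹ * ∑ n ∈ Finset.range N, h (x₀ + (n + 1) • A) with hSdef
  set L : C(AddCircle (2 * π), ℂ) → ℂ := fun h => (2 * π : ℂ)⁻¹ * ∫ x, h x with hLdef
  have hπc : ‖(2 * π : ℂ)‖ = 2 * π := by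
    rw [show (2 * π : ℂ) = ((2 * π : ℝ) : ℂ) by push_cast; ring, Complex.norm_real,
      Real.norm_eq_abs, abs_of_pos Real.two_pi_pos]
  have hint : ∀ h : C(AddCircle (2 * π), ℂ), Integrable h (volume : Measure (AddCircle (2 * π))) :=
    fun h => h.continuous.integrable_of_hasCompactSupport (HasCompactSupport.of_compactSpace _)
  have hSbound : ∀ N h, ‖S N h‖ ≤ ‖h‖ := by
    intro N h
    rcases Nat.eq_zero_or_pos N with rfl | hN
    · simpa [S] using norm_nonneg h
    · have hsum : ‖∑ n ∈ Finset.range N, h (x₀ + (n + 1) • A)‖ ≤ (N : ℝ) * ‖h‖ := by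
        refine (norm_sum_le _ _).trans ?_
        calc ∑ n ∈ Finset.range N, ‖h (x₀ + (n + 1) • A)‖
            ≤ ∑ _n ∈ Finset.range N, ‖h‖ :=
              Finset.sum_le_sum fun n _ => h.norm_coe_le_norm _
          _ = (N : ℝ) * ‖h‖ := by rw [Finset.sum_const, Finset.card_range]; ring
      have hN' : (0 : ℝ) < (N : ℝ) := by exact_mod_cast hN
      calc ‖S N h‖ = (N : ℝ)⁻¹ * ‖∑ n ∈ Finset.range N, h (x₀ + (n + 1) • A)‖ := by
            rw [hSdef]; simp only [norm_mul, norm_inv, Complex.norm_natCast]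
        _ ≤ (N : ℝ)⁻¹ * ((N : ℝ) * ‖h‖) := by
            exact mul_le_mul_of_nonneg_left hsum (by positivity)
        _ = ‖h‖ := by field_simp
  have hLbound : ∀ h, ‖L h‖ ≤ ‖h‖ := by
    intro h
    have hb : ‖∫ x, h x ∂(volume : Measure (AddCircle (2 * π)))‖
        ≤ ‖h‖ * ((volume : Measure (AddCircle (2 * π))) Set.univ).toReal :=
      norm_integral_le_of_norm_le_const (Eventually.of_forall fun x => h.norm_coe_le_norm x)
    rw [AddCircle.measure_univ, ENNReal.toReal_ofReal Real.two_pi_pos.le] at hb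
    calc ‖L h‖ = (2 * π)⁻¹ * ‖∫ x, h x‖ := by
          rw [hLdef]; simp only [norm_mul, norm_inv, hπc]
      _ ≤ (2 * π)⁻¹ * (‖h‖ * (2 * π)) := by
          exact mul_le_mul_of_nonneg_left hb (by positivity)
      _ = ‖h‖ := by field_simp
  have hspan : ∀ h ∈ Submodule.span ℂ (Set.range (@fourier (2 * π))),
      Tendsto (fun N => S N h) atTop (nhds (L h)) := by
    intro h hh
    induction hh using Submodule.span_induction with
    | mem x hx =>
      obtain ⟨k, rfl⟩ := hx
      rcases eq_or_ne k 0 with rfl | hk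
      · have hLv : L (fourier 0) = 1 := by
          rw [hLdef]
          simp only
          have : (fun x : AddCircle (2 * π) => (fourier 0 x : ℂ)) = fun _ => (1 : ℂ) := by
            ext x; exact fourier_zero
          have hπ : ((π : ℝ) : ℂ) ≠ 0 := by exact_mod_cast Real.pi_ne_zero
          rw [this, integral_const, measureReal_def, AddCircle.measure_univ,
            ENNReal.toReal_ofReal Real.two_pi_pos.le, Complex.real_smul, mul_one]
          push_cast
          field_simp
        rw [hLv]
        refine Tendsto.congr' ?_ tendsto_const_nhds
        filter_upwards [eventually_ge_atTop 1] with N hN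
        rw [hSdef]
        simp only
        have : ∀ n ∈ Finset.range N, (fourier 0 (x₀ + (n + 1) • A) : ℂ) = 1 :=
          fun n _ => fourier_zero
        rw [Finset.sum_congr rfl this, Finset.sum_const, Finset.card_range]
        simp only [nsmul_eq_mul, mul_one]
        exact (inv_mul_cancel₀ (Nat.cast_ne_zero.mpr (by omega))).symm
      · -- k ≠ 0
        have hz : (fourier k A : ℂ) ≠ 1 := ha k hk
        set z : ℂ := (fourier k A : ℂ) with hzdef
        have hzabs : ‖z‖ = 1 := abs_fourier' k A
        -- the integral vanishes
        have hJ : ∫ x, (fourier k x : ℂ) ∂(volume : Measure (AddCircle (2 * π))) = 0 := by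
          set b : AddCircle (2 * π) := ((π / (k : ℝ) : ℝ) : AddCircle (2 * π)) with hb
          have hbval : (fourier k b : ℂ) = -1 := by
            have hkc : ((k : ℂ)) ≠ 0 := by exact_mod_cast hk
            have hπc' : ((π : ℝ) : ℂ) ≠ 0 := by exact_mod_cast Real.pi_ne_zero
            rw [hb, fourier_coe_apply, ← Complex.exp_pi_mul_I]
            congr 1
            push_cast
            field_simp
          have hinv : (∫ x : AddCircle (2 * π), (fourier k (b + x) : ℂ))
              = ∫ x : AddCircle (2 * π), (fourier k x : ℂ) :=
            integral_add_left_eq_self _ b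
          have hsplit : ∫ x, (fourier k (b + x) : ℂ) ∂(volume : Measure (AddCircle (2 * π)))
              = (fourier k b : ℂ) * ∫ x, (fourier k x : ℂ) ∂(volume : Measure (AddCircle (2 * π))) := by
            simp_rw [fourier_char]
            exact integral_const_mul _ _
          rw [hsplit, hbval] at hinv
          linear_combination (-1 / 2 : ℂ) * hinv
        have hLv : L (fourier k) = 0 := by rw [hLdef]; simp only [hJ, mul_zero]
        rw [hLv]
        set C : ℝ := 2 / ‖z - 1‖ with hC
        have hnorm : ∀ N : ℕ, ‖S N (fourier k)‖ ≤ (N : ℝ)⁻¹ * C := by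
          intro N
          have hterm : ∀ n ∈ Finset.range N,
              (fourier k (x₀ + (n + 1) • A) : ℂ) = (fourier k x₀ : ℂ) * z ^ (n + 1) :=
            fun n _ => fourier_shift k (n + 1) x₀ A
          have hgeom : ∑ n ∈ Finset.range N, z ^ (n + 1) = z * ((z ^ N - 1) / (z - 1)) := by
            rw [← geom_sum_eq hz N, Finset.mul_sum]
            exact Finset.sum_congr rfl fun n _ => pow_succ' z n
          have h1 : ‖z‖ = 1 := by exact hzabs
          have h3 : (0 : ℝ) < ‖z - 1‖ := by
            rw [norm_pos_iff]
            exact sub_ne_zero.mpr hz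
          have hgnorm : ‖∑ n ∈ Finset.range N, z ^ (n + 1)‖ ≤ C := by
            rw [hgeom, hC, norm_mul, norm_div, h1, one_mul]
            have h2 : ‖z ^ N - 1‖ ≤ 2 := by
              calc ‖z ^ N - 1‖ ≤ ‖z ^ N‖ + ‖(1 : ℂ)‖ := norm_sub_le _ _
                _ = 1 + 1 := by rw [norm_pow, h1, one_pow, norm_one]
                _ = 2 := by norm_num
            exact (div_le_div_iff_of_pos_right h3).mpr h2
          have hSv : S N (fourier k)
              = (N : ℂ)⁻¹ * ((fourier k x₀ : ℂ) * ∑ n ∈ Finset.range N, z ^ (n + 1)) := by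
            rw [hSdef]
            simp only
            rw [Finset.sum_congr rfl hterm, ← Finset.mul_sum]
          rw [hSv, norm_mul, norm_mul, norm_inv, Complex.norm_natCast]
          have hf1 : ‖(fourier k x₀ : ℂ)‖ = 1 := by
            exact abs_fourier' k x₀
          rw [hf1, one_mul]
          exact mul_le_mul_of_nonneg_left hgnorm (by positivity)
        have h0 : Tendsto (fun N : ℕ => (N : ℝ)⁻¹ * C) atTop (nhds 0) := by
          have := (tendsto_inv_atTop_nhds_zero_nat (𝕜 := ℝ)).mul_const C
          rwa [zero_mul] at this
        exact squeeze_zero_norm hnorm h0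
    | zero =>
      have h1 : ∀ N, S N 0 = 0 := by intro N; simp [hSdef]
      have h2 : L 0 = 0 := by simp [hLdef]
      simp only [h1, h2]
      exact tendsto_const_nhds
    | add x y hx hy ihx ihy =>
      have h1 : ∀ N, S N (x + y) = S N x + S N y := by
        intro N
        rw [hSdef]
        simp only [ContinuousMap.add_apply]
        rw [← mul_add, ← Finset.sum_add_distrib]
      have h2 : L (x + y) = L x + L y := by
        rw [hLdef]
        simp only [ContinuousMap.add_apply]
        rw [integral_add (hint x) (hint y), mul_add]
      simp only [h1, h2]
      exact ihx.add ihy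
    | smul c x hx ih =>
      have h1 : ∀ N, S N (c • x) = c * S N x := by
        intro N
        rw [hSdef]
        simp only [ContinuousMap.smul_apply, smul_eq_mul]
        rw [← Finset.mul_sum]
        ring
      have h2 : L (c • x) = c * L x := by
        rw [hLdef]
        simp only [ContinuousMap.smul_apply, smul_eq_mul]
        rw [integral_const_mul]
        ring
      simp only [h1, h2]
      exact ih.const_mul c
  -- density step
  refine Metric.tendsto_atTop.mpr fun ε hε => ?_
  have hg' : g ∈ closure ((Submodule.span ℂ (Set.range (@fourier (2 * π))) : Submodule ℂ _) :
      Set C(AddCircle (2 * π), ℂ)) := by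
    rw [← Submodule.topologicalClosure_coe, span_fourier_closure_eq_top]
    trivial
  obtain ⟨h, hhs, hdist⟩ := Metric.mem_closure_iff.mp hg' (ε / 4) (by linarith)
  have hgh : ‖g - h‖ < ε / 4 := by rwa [← dist_eq_norm]
  obtain ⟨N₀, hN₀⟩ := Metric.tendsto_atTop.mp (hspan h hhs) (ε / 4) (by linarith)
  refine ⟨N₀, fun N hN => ?_⟩
  have e1 : ‖S N g - S N h‖ ≤ ‖g - h‖ := by
    have heq : S N g - S N h = S N (g - h) := by
      rw [hSdef]
      simp only [ContinuousMap.sub_apply]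
      rw [← mul_sub, ← Finset.sum_sub_distrib]
    rw [heq]
    exact hSbound N _
  have e2 : ‖L h - L g‖ ≤ ‖g - h‖ := by
    have heq : L h - L g = -L (g - h) := by
      rw [hLdef]
      simp only [ContinuousMap.sub_apply]
      rw [integral_sub (hint g) (hint h)]
      ring
    rw [heq, norm_neg]
    exact hLbound _
  calc dist (S N g) (L g)
      ≤ dist (S N g) (S N h) + dist (S N h) (L h) + dist (L h) (L g) := dist_triangle4 _ _ _ _
    _ < ε / 4 + ε / 4 + ε / 4 := by
        refine add_lt_add (add_lt_add ?_ (hN₀ N hN)) ?_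
        · rw [dist_eq_norm]; exact e1.trans_lt hgh
        · rw [dist_eq_norm]; exact e2.trans_lt hgh
    _ < ε := by linarith

lemma point_tendsto (α : ℝ) (hα : Irrational α) (f : ℂ → ℝ) (hf : Continuous f) (z : ℂ) :
    Tendsto (fun N : ℕ => (N : ℝ)⁻¹ * ∑ n ∈ Finset.range N,
        f (Complex.exp (2 * π * α * Complex.I) ^ (n + 1) * z))
      atTop (nhds (∫ w, f w ∂circleUniform ‖z‖)) := by
  have hπ2 : (2 * π : ℝ) ≠ 0 := Real.two_pi_pos.ne'
  set r : ℝ := ‖z‖ with hrdef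
  have hgc : Continuous fun x : AddCircle (2 * π) => f ((r : ℂ) * (AddCircle.toCircle x : ℂ)) :=
    hf.comp (continuous_const.mul
      (continuous_induced_dom.comp AddCircle.continuous_toCircle))
  set F : AddCircle (2 * π) → ℝ := fun x => f ((r : ℂ) * (AddCircle.toCircle x : ℂ)) with hF
  set g : C(AddCircle (2 * π), ℂ) :=
    ⟨fun x => ((F x : ℝ) : ℂ), Complex.continuous_ofReal.comp hgc⟩ with hg
  -- the irrationality condition
  have ha : ∀ k : ℤ, k ≠ 0 → (fourier k (((2 * π * α : ℝ)) : AddCircle (2 * π)) : ℂ) ≠ 1 := by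
    intro k hk h1
    have hπ : (π : ℂ) ≠ 0 := by exact_mod_cast Real.pi_ne_zero
    have hE : 2 * (π : ℂ) * Complex.I * (k : ℂ) * ((2 * π * α : ℝ) : ℂ) / ((2 * π : ℝ) : ℂ)
        = ((k * α : ℝ) : ℂ) * (2 * (π : ℂ) * Complex.I) := by
      push_cast
      field_simp
    rw [fourier_coe_apply, hE, Complex.exp_eq_one_iff] at h1
    obtain ⟨n, hn⟩ := h1
    have h2πI : (2 * (π : ℂ) * Complex.I) ≠ 0 := by
      simp [hπ, Complex.I_ne_zero]
    have hc : ((k * α : ℝ) : ℂ) = (n : ℂ) := mul_right_cancel₀ h2πI hn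
    have hre : (k : ℝ) * α = (n : ℝ) := by exact_mod_cast hc
    have hk' : (k : ℝ) ≠ 0 := Int.cast_ne_zero.mpr hk
    exact hα ⟨(n : ℚ) / (k : ℚ), by push_cast; field_simp; linarith [hre]⟩
  have key := weyl (2 * π * α) ha ((Complex.arg z : ℝ) : AddCircle (2 * π)) g
  -- evaluate g on reals
  have hmk : ∀ s : ℝ, g ((s : ℝ) : AddCircle (2 * π))
      = ((f ((r : ℂ) * Complex.exp ((s : ℂ) * Complex.I)) : ℝ) : ℂ) := by
    intro s
    simp only [hg, ContinuousMap.coe_mk, hF]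
    rw [AddCircle.toCircle_apply_mk, Circle.coe_exp, div_self hπ2, one_mul]
  -- sequence identification
  have hseq : (fun N : ℕ => (((N : ℝ)⁻¹ * ∑ n ∈ Finset.range N,
        f (Complex.exp (2 * π * α * Complex.I) ^ (n + 1) * z) : ℝ) : ℂ))
      = fun N : ℕ => (N : ℂ)⁻¹ * ∑ n ∈ Finset.range N,
        g (((Complex.arg z : ℝ) : AddCircle (2 * π))
          + (n + 1) • (((2 * π * α : ℝ)) : AddCircle (2 * π))) := by
    funext N
    push_cast
    congr 1
    refine Finset.sum_congr rfl fun n _ => ?_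
    have hpt : ((Complex.arg z : ℝ) : AddCircle (2 * π))
        + (n + 1) • (((2 * π * α : ℝ)) : AddCircle (2 * π))
        = ((Complex.arg z + ((n : ℝ) + 1) * (2 * π * α) : ℝ) : AddCircle (2 * π)) := by
      rw [← QuotientAddGroup.mk_nsmul, ← QuotientAddGroup.mk_add]
      congr 1
      push_cast [nsmul_eq_mul]
      ring
    rw [hpt, hmk]
    congr 2
    conv_lhs => rw [← Complex.norm_mul_exp_arg_mul_I z]
    rw [← hrdef]
    rw [show Complex.exp (2 * π * α * Complex.I) ^ (n + 1)
        = Complex.exp (((n : ℂ) + 1) * (2 * (π : ℂ) * (α : ℂ) * Complex.I)) from by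
      rw [← Complex.exp_nat_mul]; push_cast; ring_nf]
    rw [show ((Complex.arg z + ((n : ℝ) + 1) * (2 * π * α) : ℝ) : ℂ) * Complex.I
        = ((n : ℂ) + 1) * (2 * (π : ℂ) * (α : ℂ) * Complex.I)
          + (Complex.arg z : ℂ) * Complex.I from by push_cast; ring, Complex.exp_add]
    ring
  -- limit identification
  have hval : (2 * π : ℂ)⁻¹ * ∫ x, g x
      = ((∫ w, f w ∂circleUniform r : ℝ) : ℂ) := by
    have h1 : ∫ x, (g x : ℂ) ∂(volume : Measure (AddCircle (2 * π)))
        = ((∫ x, F x ∂(volume : Measure (AddCircle (2 * π))) : ℝ) : ℂ) := by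
      simp only [hg, ContinuousMap.coe_mk]
      exact integral_ofReal
    have h2 : ∫ x, F x ∂(volume : Measure (AddCircle (2 * π)))
        = ∫ θ in Set.Ioc (0 : ℝ) (2 * π), f ((r : ℂ) * Complex.exp ((θ : ℂ) * Complex.I)) := by
      rw [← AddCircle.integral_preimage (2 * π) 0 F, zero_add]
      refine setIntegral_congr_fun measurableSet_Ioc fun θ _ => ?_
      simp only [hF]
      rw [AddCircle.toCircle_apply_mk, Circle.coe_exp, div_self hπ2, one_mul]
    rw [h1, h2, integral_circleUniform r f hf]
    push_cast
    ring
  rw [← hseq, hval] at key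
  have hre := (Complex.continuous_re.tendsto _).comp key
  simp only [Function.comp_def, Complex.ofReal_re] at hre
  exact hre

/-- For irrational `α ∈ (0,1)` and `R` the rotation through `2πα`, the measures
`ω_N = (1/N) ∑_{n=1}^N δ_{Rⁿℤ²}` converge vaguely to
`ω = ∑_{r ∈ D} η(r) μ_r`, where `D` is the set of shell radii of `ℤ²`, `η(r)`
the corresponding shelling numbers, and `μ_r` the uniform probability measure on
the circle of radius `r` (with `μ_0 = δ_0`). -/
theorem rotated_lattice_combs_converge_vaguely (α : ℝ) (hα : Irrational α)
    (h0 : 0 < α) (h1 : α < 1)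
    (f : ℂ → ℝ) (hf : Continuous f) (hsupp : HasCompactSupport f) :
    Tendsto (fun N : ℕ =>
        ∫ z, f z ∂((N : ℝ≥0∞)⁻¹ • ∑ n ∈ Finset.range N,
          rotLatticeComb (Complex.exp (2 * π * α * Complex.I) ^ (n + 1))))
      atTop
      (nhds (∫ z, f z ∂(Measure.sum fun r : shellRadii =>
        (shellCount r : ℝ≥0∞) • circleUniform r))) := by
  classical
  obtain ⟨M0, hM0⟩ := (Metric.isBounded_iff_subset_closedBall 0).mp hsupp.isBounded
  set M : ℝ := max M0 0 with hMdef
  have hM : tsupport f ⊆ Metric.closedBall 0 M :=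
    hM0.trans (Metric.closedBall_subset_closedBall (le_max_left _ _))
  have hM0' : (0 : ℝ) ≤ M := le_max_right _ _
  have hfzero : ∀ x : ℂ, M < ‖x‖ → f x = 0 := by
    intro x hx
    apply image_eq_zero_of_notMem_tsupport
    intro hmem
    have := hM hmem
    rw [Metric.mem_closedBall, Complex.dist_eq, sub_zero] at this
    exact absurd this (not_le.mpr hx)
  set u : ℂ := Complex.exp (2 * π * α * Complex.I) with hu
  have habsu : ∀ n : ℕ, ‖u ^ (n + 1)‖ = 1 := by
    intro n
    rw [norm_pow]
    have : ‖u‖ = 1 := by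
      rw [hu, Complex.norm_exp]
      have : (2 * (π : ℂ) * (α : ℂ) * Complex.I).re = 0 := by simp
      rw [this, Real.exp_zero]
    rw [this, one_pow]
  set S : Finset (ℤ × ℤ) := (finite_ball M).toFinset with hSdef
  have hmemS : ∀ p : ℤ × ℤ, p ∈ S ↔ ‖latC p‖ ≤ M := by
    intro p
    rw [hSdef, Set.Finite.mem_toFinset]
    rfl
  have hSf : ∀ n : ℕ, ∀ p : ℤ × ℤ, p ∉ S → f (u ^ (n + 1) * latC p) = 0 := by
    intro n p hp
    apply hfzero
    rw [norm_mul, habsu, one_mul]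
    exact not_le.mp (fun h => hp ((hmemS p).mpr h))
  have hI := fun n : ℕ => integral_rotLatticeComb (u ^ (n + 1)) f hf S (hSf n)
  -- LHS rewriting
  have hLHS : ∀ N : ℕ, ∫ z, f z ∂((N : ℝ≥0∞)⁻¹ • ∑ n ∈ Finset.range N,
        rotLatticeComb (u ^ (n + 1)))
      = ∑ p ∈ S, ((N : ℝ)⁻¹ * ∑ n ∈ Finset.range N, f (u ^ (n + 1) * latC p)) := by
    intro N
    rw [integral_smul_measure, integral_finset_sum_measure fun n _ => (hI n).1,
      ENNReal.toReal_inv, ENNReal.toReal_natCast,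
      Finset.sum_congr rfl fun n _ => (hI n).2, Finset.sum_comm, smul_eq_mul, Finset.mul_sum]
  -- limit of LHS
  have hT : Tendsto (fun N : ℕ => ∑ p ∈ S, ((N : ℝ)⁻¹ * ∑ n ∈ Finset.range N,
        f (u ^ (n + 1) * latC p))) atTop
      (nhds (∑ p ∈ S, ∫ w, f w ∂circleUniform ‖latC p‖)) :=
    tendsto_finset_sum _ fun p _ => point_tendsto α hα f hf (latC p)
  -- vanishing for large radii
  have hvanish : ∀ r : ℝ, 0 ≤ r → M < r → ∫ z, f z ∂circleUniform r = 0 := by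
    intro r hr0 hrM
    rw [integral_circleUniform r f hf]
    have : ∀ θ ∈ Set.Ioc (0 : ℝ) (2 * π),
        f ((r : ℂ) * Complex.exp ((θ : ℂ) * Complex.I)) = (0 : ℝ) := by
      intro θ _
      apply hfzero
      rw [norm_mul, Complex.norm_real, Real.norm_eq_abs, abs_of_nonneg hr0, Complex.norm_exp_ofReal_mul_I, mul_one]
      exact hrM
    rw [setIntegral_congr_fun measurableSet_Ioc this]
    simp
  have hlvanish : ∀ r : ℝ, 0 ≤ r → M < r →
      ∫⁻ x, ‖f x‖ₑ ∂circleUniform r = 0 := by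
    intro r hr0 hrM
    rw [circleUniform, lintegral_map' hf.measurable.enorm.aemeasurable
      (contMap r).aemeasurable]
    have : ∀ θ : ℝ, ‖f ((r : ℂ) * Complex.exp ((θ : ℂ) * Complex.I))‖ₑ = 0 := by
      intro θ
      have : f ((r : ℂ) * Complex.exp ((θ : ℂ) * Complex.I)) = 0 := by
        apply hfzero
        rw [norm_mul, Complex.norm_real, Real.norm_eq_abs, abs_of_nonneg hr0, Complex.norm_exp_ofReal_mul_I, mul_one]
        exact hrM
      rw [this]
      simp
    simp_rw [this]
    simp
  -- bound
  obtain ⟨C, hC⟩ := hsupp.norm.exists_bound_of_continuous hf.norm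
  have hlbound : ∀ r : ℝ, ∫⁻ x, ‖f x‖ₑ ∂circleUniform r ≤ ENNReal.ofReal C := by
    intro r
    calc ∫⁻ x, ‖f x‖ₑ ∂circleUniform r
        ≤ ∫⁻ _, ENNReal.ofReal C ∂circleUniform r := by
          refine lintegral_mono fun x => ?_
          rw [← ofReal_norm]
          exact ENNReal.ofReal_le_ofReal (by simpa using hC x)
      _ = ENNReal.ofReal C := by rw [lintegral_const, circleUniform_univ, mul_one]
  -- finite set of relevant radii
  set TR : Finset ℝ := (finite_radii M).toFinset with hTRdef
  have hmemTR : ∀ r : ℝ, r ∈ TR ↔ r ∈ shellRadii ∧ r ≤ M := by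
    intro r
    rw [hTRdef, Set.Finite.mem_toFinset]
    rfl
  have hfinTF : {rr : shellRadii | (rr : ℝ) ≤ M}.Finite := by
    have hpre : {rr : shellRadii | (rr : ℝ) ≤ M}
        = (fun rr : shellRadii => (rr : ℝ)) ⁻¹' {r : ℝ | r ∈ shellRadii ∧ r ≤ M} := by
      ext rr
      exact ⟨fun h => ⟨rr.2, h⟩, fun h => h.2⟩
    rw [hpre]
    exact (finite_radii M).preimage Subtype.coe_injective.injOn
  set TF : Finset shellRadii := hfinTF.toFinset with hTFdef
  -- integrability with respect to ω
  have hωint : Integrable f (Measure.sum fun rr : shellRadii =>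
      (shellCount rr : ℝ≥0∞) • circleUniform rr) := by
    refine ⟨hf.aestronglyMeasurable, ?_⟩
    rw [hasFiniteIntegral_def, lintegral_sum_measure]
    simp_rw [lintegral_smul_measure, smul_eq_mul]
    have hz : ∀ rr : shellRadii, rr ∉ TF →
        (shellCount (rr : ℝ) : ℝ≥0∞) * ∫⁻ x, ‖f x‖ₑ ∂circleUniform (rr : ℝ) = 0 := by
      intro rr hrr
      have hgt : M < (rr : ℝ) := by
        by_contra hle
        exact hrr (hfinTF.mem_toFinset.mpr (not_lt.mp hle))
      rw [hlvanish (rr : ℝ) rr.2.1 hgt, mul_zero]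
    rw [tsum_eq_sum hz]
    refine ENNReal.sum_lt_top.mpr fun rr _ => ?_
    calc (shellCount (rr : ℝ) : ℝ≥0∞) * ∫⁻ x, ‖f x‖ₑ ∂circleUniform (rr : ℝ)
        ≤ (shellCount (rr : ℝ) : ℝ≥0∞) * ENNReal.ofReal C :=
          mul_le_mul_right (hlbound _) _
      _ < ⊤ := ENNReal.mul_lt_top (ENNReal.natCast_lt_top _) ENNReal.ofReal_lt_top
  -- value of the ω-integral
  have hω : ∫ z, f z ∂(Measure.sum fun rr : shellRadii =>
        (shellCount rr : ℝ≥0∞) • circleUniform rr)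
      = ∑' rr : shellRadii, (shellCount (rr : ℝ) : ℝ) * ∫ z, f z ∂circleUniform (rr : ℝ) := by
    rw [integral_sum_measure hωint]
    refine tsum_congr fun rr => ?_
    rw [integral_smul_measure, ENNReal.toReal_natCast, smul_eq_mul]
  have htsum : (∑' rr : shellRadii, (shellCount (rr : ℝ) : ℝ) * ∫ z, f z ∂circleUniform (rr : ℝ))
      = ∑ r ∈ TR, (shellCount r : ℝ) * ∫ z, f z ∂circleUniform r := by
    rw [tsum_subtype shellRadii (fun r : ℝ => (shellCount r : ℝ) * ∫ z, f z ∂circleUniform r)]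
    rw [tsum_eq_sum (s := TR) ?_]
    · exact Finset.sum_congr rfl fun r hr =>
        Set.indicator_of_mem ((hmemTR r).mp hr).1 _
    · intro r hr
      by_cases hmem : r ∈ shellRadii
      · rw [Set.indicator_of_mem hmem]
        have hgt : M < r := by
          by_contra hle
          exact hr ((hmemTR r).mpr ⟨hmem, not_lt.mp hle⟩)
        rw [hvanish r hmem.1 hgt, mul_zero]
      · exact Set.indicator_of_notMem hmem _
  -- combinatorial regrouping
  have hcomb : (∑ p ∈ S, ∫ w, f w ∂circleUniform ‖latC p‖)
      = ∑ r ∈ TR, (shellCount r : ℝ) * ∫ z, f z ∂circleUniform r := by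
    rw [Finset.sum_comp (fun r : ℝ => ∫ w, f w ∂circleUniform r)
      (fun p => ‖latC p‖)]
    have himg : S.image (fun p => ‖latC p‖) = TR := by
      ext r
      simp only [Finset.mem_image]
      rw [hmemTR]
      constructor
      · rintro ⟨p, hp, rfl⟩
        exact ⟨⟨norm_nonneg _, p.1, p.2, sq_abs_latC p⟩, (hmemS p).mp hp⟩
      · rintro ⟨⟨hr0, m, n, hmn⟩, hrM⟩
        have habs : ‖latC (m, n)‖ = r := by
          have h2 : ‖latC (m, n)‖ ^ 2 = r ^ 2 := by
            rw [sq_abs_latC, hmn]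
          exact (sq_eq_sq₀ (norm_nonneg _) hr0).mp h2
        exact ⟨(m, n), (hmemS _).mpr (habs ▸ hrM), habs⟩
    rw [himg]
    refine Finset.sum_congr rfl fun r hr => ?_
    have hcard : (S.filter fun p => ‖latC p‖ = r).card = shellCount r := by
      have hset : (↑(S.filter fun p => ‖latC p‖ = r) : Set (ℤ × ℤ))
          = {p : ℤ × ℤ | ‖(p.1 : ℂ) + (p.2 : ℂ) * Complex.I‖ = r} := by
        ext p
        simp only [Finset.coe_filter, Set.mem_setOf_eq]
        constructor
        · rintro ⟨_, h⟩
          exact h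
        · intro h
          refine ⟨(hmemS p).mpr ?_, h⟩
          rw [show ‖latC p‖ = ‖(p.1 : ℂ) + (p.2 : ℂ) * Complex.I‖ from rfl, h]
          exact ((hmemTR r).mp hr).2
      rw [shellCount, ← hset, Set.ncard_coe_finset]
    rw [← hcard, nsmul_eq_mul]
  -- assemble
  have hfinal : ∫ z, f z ∂(Measure.sum fun rr : shellRadii =>
        (shellCount rr : ℝ≥0∞) • circleUniform rr)
      = ∑ p ∈ S, ∫ w, f w ∂circleUniform ‖latC p‖ := by
    rw [hω, htsum, ← hcomb]
  rw [hfinal]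
  exact Tendsto.congr (fun N => (hLHS N).symm) hT
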